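/- arXiv:2111.12882 — 4 statements merged into one kernel-verified Lean document; each statement's English description precedes it below -/
import Mathlib

section
/- Let T : 𝕋 → 𝕋 be given by T(x) = x(1 + V(x)) mod 1 on the circle 𝕋 = ℝ/ℤ with metric d(x,y) = min{|x−y|, |x−y±1|}, where V : [0,∞) → [0,∞) is continuous, increasing, V(0)=0, V(1) ∈ ℕ₊, and V is regularly varying at 0 with index σ ≥ 0. Then there exists ρ₀ > 0 such that for all x, y ∈ 𝕋 with d(x,y) < ρ₀, d(T(x), T(y)) ≥ d(x,y)·(1 + 2^{−(σ+2)} V(d(x,y))). -/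
open Real Filter Set

/-- The circle metric on `[0,1)`: `d(x,y) = min{|x−y|, |x−y−1|, |x−y+1|}`. -/
noncomputable def cdist (x y : ℝ) : ℝ := min |x - y| (min |x - y - 1| |x - y + 1|)

/-- The map `T(x) = x(1 + V(x)) mod 1` on the circle represented as `[0,1)`. -/
noncomputable def circMap (V : ℝ → ℝ) (x : ℝ) : ℝ := Int.fract (x * (1 + V x))

lemma cdist_nonneg' (x y : ℝ) : 0 ≤ cdist x y :=
  le_min (abs_nonneg _) (le_min (abs_nonneg _) (abs_nonneg _))

lemma cdist_comm' (x y : ℝ) : cdist x y = cdist y x := by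
  unfold cdist
  rw [abs_sub_comm, show x - y - 1 = -(y - x + 1) by ring,
    show x - y + 1 = -(y - x - 1) by ring, abs_neg, abs_neg, min_comm (|y - x + 1|)]

lemma cdist_eq_short {x y : ℝ} (h0 : 0 ≤ y - x) (h2 : y - x ≤ 1 / 2) :
    cdist x y = y - x := by
  have a1 : |x - y| = y - x := by rw [abs_of_nonpos (by linarith)]; ring
  have a2 : |x - y - 1| = y - x + 1 := by rw [abs_of_nonpos (by linarith)]; ring
  have a3 : |x - y + 1| = 1 - (y - x) := by rw [abs_of_nonneg (by linarith)]; ring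
  rw [cdist, a1, a2, a3]
  have i1 : min (y - x + 1) (1 - (y - x)) = 1 - (y - x) := min_eq_right (by linarith)
  rw [i1]
  exact min_eq_left (by linarith)

lemma cdist_eq_long {x y : ℝ} (h0 : 1 / 2 ≤ y - x) (h1 : y - x < 1) :
    cdist x y = 1 - (y - x) := by
  have a1 : |x - y| = y - x := by rw [abs_of_nonpos (by linarith)]; ring
  have a2 : |x - y - 1| = y - x + 1 := by rw [abs_of_nonpos (by linarith)]; ring
  have a3 : |x - y + 1| = 1 - (y - x) := by rw [abs_of_nonneg (by linarith)]; ring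
  rw [cdist, a1, a2, a3]
  have i1 : min (y - x + 1) (1 - (y - x)) = 1 - (y - x) := min_eq_right (by linarith)
  rw [i1]
  exact min_eq_right (by linarith)

lemma cdist_lower {a b Δ : ℝ} (ha : a ∈ Set.Ico (0 : ℝ) 1) (hb : b ∈ Set.Ico (0 : ℝ) 1)
    (hΔ0 : 0 ≤ Δ) (hΔh : Δ ≤ 1 / 2) (k : ℤ) (hk : a - b = Δ + k) :
    Δ ≤ cdist a b := by
  obtain ⟨ha0, ha1⟩ := ha
  obtain ⟨hb0, hb1⟩ := hb
  have hab1 : a - b < 1 := by linarith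
  have hab2 : -1 < a - b := by linarith
  have hk0 : k = 0 ∨ k = -1 := by
    have h1 : (k : ℝ) < 1 := by linarith
    have h2 : (-2 : ℝ) < k := by linarith
    have h1' : k < (1 : ℤ) := by exact_mod_cast h1
    have h2' : (-2 : ℤ) < k := by exact_mod_cast h2
    omega
  rcases hk0 with h | h <;> subst h <;> push_cast at hk
  · exact le_min (le_abs.2 (Or.inl (by linarith)))
      (le_min (le_abs.2 (Or.inr (by linarith))) (le_abs.2 (Or.inl (by linarith))))
  · exact le_min (le_abs.2 (Or.inr (by linarith)))
      (le_min (le_abs.2 (Or.inr (by linarith))) (le_abs.2 (Or.inl (by linarith))))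

set_option maxHeartbeats 2000000 in
/-- Distance-expansion lemma: for `T(x) = x(1+V(x)) mod 1` with `V` continuous,
increasing, `V(0)=0`, `V(1)` a positive integer, regularly varying at `0` with index
`σ ≥ 0`, there is `ρ₀ > 0` so that `d(Tx,Ty) ≥ d(x,y)(1 + 2^{−(σ+2)} V(d(x,y)))`
whenever `d(x,y) < ρ₀`. -/
theorem distance_expansion (V : ℝ → ℝ) (σ : ℝ) (hσ : 0 ≤ σ) (N : ℕ) (hN : 0 < N)
    (hV0 : V 0 = 0) (hV1 : V 1 = N) (hVnn : ∀ x, 0 ≤ x → 0 ≤ V x)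
    (hVcont : ContinuousOn V (Ici 0)) (hVmono : StrictMonoOn V (Ici 0))
    (hreg : ∀ t : ℝ, 0 < t →
      Tendsto (fun x => V (t * x) / V x) (nhdsWithin 0 (Ioi 0)) (nhds (t ^ σ))) :
    ∃ ρ₀ > 0, ∀ x ∈ Ico (0 : ℝ) 1, ∀ y ∈ Ico (0 : ℝ) 1, cdist x y < ρ₀ →
      cdist x y * (1 + (2 : ℝ) ^ (-(σ + 2)) * V (cdist x y)) ≤
        cdist (circMap V x) (circMap V y) := by
  -- monotonicity in `≤` form
  have hVle : ∀ a b : ℝ, 0 ≤ a → a ≤ b → V a ≤ V b := fun a b ha hab =>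
    hVmono.monotoneOn (Set.mem_Ici.2 ha) (Set.mem_Ici.2 (ha.trans hab)) hab
  have hVpos : ∀ a : ℝ, 0 < a → 0 < V a := fun a ha => by
    have := hVmono (Set.mem_Ici.2 le_rfl) (Set.mem_Ici.2 ha.le) ha
    rwa [hV0] at this
  -- uniform continuity on [0,1]
  obtain ⟨δ₁, hδ₁pos, hδ₁⟩ := Metric.uniformContinuousOn_iff.1
    ((isCompact_Icc : IsCompact (Icc (0 : ℝ) 1)).uniformContinuousOn_of_continuous
      (hVcont.mono (Icc_subset_Ici_self))) (1 / 8) (by norm_num)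
  -- regular variation bound at t = 2
  have h2σpos : (0 : ℝ) < 2 ^ σ := Real.rpow_pos_of_pos two_pos σ
  have hup : (2 : ℝ) ^ σ < 2 ^ (σ + 1) := by
    rw [Real.rpow_add two_pos, Real.rpow_one]; linarith
  have hev : ∀ᶠ z in nhdsWithin 0 (Ioi 0), V (2 * z) / V z < 2 ^ (σ + 1) :=
    (hreg 2 two_pos).eventually_lt_const hup
  rw [eventually_nhdsWithin_iff, Metric.eventually_nhds_iff] at hev
  obtain ⟨δ₂, hδ₂pos, hδ₂⟩ := hev
  have hreg' : ∀ t : ℝ, 0 < t → t < δ₂ → V (2 * t) ≤ 2 ^ (σ + 1) * V t := by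
    intro t ht htδ
    have h := hδ₂ (show dist t 0 < δ₂ by rw [Real.dist_eq, sub_zero, abs_of_pos ht]; exact htδ)
      (Set.mem_Ioi.2 ht)
    have hVt := hVpos t ht
    exact le_of_lt ((div_lt_iff₀ hVt).1 h)
  -- choose ρ₀
  set ρ₀ : ℝ := min δ₁ (min δ₂ (1 / (8 * (N + 1)))) with hρ₀def
  have hNpos : (0 : ℝ) < N + 1 := by positivity
  have hρ₀pos : 0 < ρ₀ := lt_min hδ₁pos (lt_min hδ₂pos (by positivity))
  have hρ1 : ρ₀ ≤ δ₁ := min_le_left _ _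
  have hρ2 : ρ₀ ≤ δ₂ := le_trans (min_le_right _ _) (min_le_left _ _)
  have hρ3 : ρ₀ ≤ 1 / (8 * (N + 1)) := le_trans (min_le_right _ _) (min_le_right _ _)
  have hρN : ρ₀ * (1 + N) ≤ 1 / 8 := by
    have h := mul_le_mul_of_nonneg_right hρ3 (le_of_lt hNpos)
    rw [div_mul_eq_mul_div, one_mul] at h
    calc ρ₀ * (1 + N) = ρ₀ * (N + 1) := by ring
      _ ≤ (N + 1) / (8 * (N + 1)) := h
      _ = 1 / 8 := by field_simp
  have hρ8 : ρ₀ ≤ 1 / 8 := by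
    have hN1 : (1 : ℝ) ≤ N := by exact_mod_cast hN
    nlinarith [mul_nonneg hρ₀pos.le (le_trans zero_le_one hN1)]
  -- constant bounds
  have hc_pos : 0 < (2 : ℝ) ^ (-(σ + 2)) := Real.rpow_pos_of_pos two_pos _
  have hc_half : (2 : ℝ) ^ (-(σ + 2)) ≤ 1 / 2 := by
    have h := Real.rpow_le_rpow_of_exponent_le (one_le_two)
      (show -(σ + 2) ≤ (-1 : ℝ) by linarith)
    rw [Real.rpow_neg_one] at h
    linarith [h]
  refine ⟨ρ₀, hρ₀pos, ?_⟩
  have key : ∀ x ∈ Ico (0 : ℝ) 1, ∀ y ∈ Ico (0 : ℝ) 1, x ≤ y → cdist x y < ρ₀ →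
      cdist x y * (1 + (2 : ℝ) ^ (-(σ + 2)) * V (cdist x y)) ≤
        cdist (circMap V x) (circMap V y) := by
    intro x hx y hy hxy hlt
    obtain ⟨hx0, hx1⟩ := hx
    obtain ⟨hy0, hy1⟩ := hy
    rcases (cdist_nonneg' x y).lt_or_eq with hdpos | hdeq
    swap
    · rw [← hdeq, zero_mul]; exact cdist_nonneg' _ _
    have hVx := hVnn x hx0
    have hVy := hVnn y hy0
    have hVxy := hVle x y hx0 hxy
    have hVyN : V y ≤ N := by rw [← hV1]; exact hVle y 1 hy0 hy1.le
    have hfract : ∀ t : ℝ, Int.fract t = t - ⌊t⌋ := fun t => rfl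
    by_cases hhalf : y - x ≤ 1 / 2
    · -- short-arc case
      have hdval : cdist x y = y - x := cdist_eq_short (by linarith) hhalf
      rw [hdval] at hlt hdpos ⊢
      have hVd : V (y - x) ≤ V y := hVle _ _ hdpos.le (by linarith)
      have hVd0 : 0 ≤ V (y - x) := hVnn _ hdpos.le
      -- uniform continuity bound
      have hucV : V y - V x < 1 / 8 := by
        have h := hδ₁ x ⟨hx0, hx1.le⟩ y ⟨hy0, hy1.le⟩
          (by rw [Real.dist_eq, abs_of_nonpos (by linarith)]; linarith)
        rw [Real.dist_eq] at h
        calc V y - V x ≤ |V y - V x| := le_abs_self _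
          _ = |V x - V y| := abs_sub_comm _ _
          _ < 1 / 8 := h
      set Δ : ℝ := y * (1 + V y) - x * (1 + V x) with hΔdef
      have hlb : (y - x) * (1 + V (y - x)) ≤ Δ := by
        have h1 : 0 ≤ x * (V y - V x) := mul_nonneg hx0 (by linarith)
        have h2 : 0 ≤ (y - x) * (V y - V (y - x)) :=
          mul_nonneg hdpos.le (by linarith)
        nlinarith
      have hub : Δ ≤ 1 / 2 := by
        have h1 : (y - x) * V y ≤ ρ₀ * N :=
          mul_le_mul hlt.le hVyN hVy hρ₀pos.le
        have h2 : x * (V y - V x) ≤ V y - V x :=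
          mul_le_of_le_one_left (by linarith) hx1.le
        nlinarith
      have hΔ0 : 0 ≤ Δ := le_trans (mul_nonneg (by linarith) (by linarith)) hlb
      have hGΔ : (y - x) * (1 + (2 : ℝ) ^ (-(σ + 2)) * V (y - x)) ≤ Δ := by
        have h1 : (2 : ℝ) ^ (-(σ + 2)) * V (y - x) ≤ V (y - x) :=
          mul_le_of_le_one_left hVd0 (by linarith)
        nlinarith
      have hfin : Δ ≤ cdist (circMap V y) (circMap V x) := by
        refine cdist_lower ⟨Int.fract_nonneg _, Int.fract_lt_one _⟩
          ⟨Int.fract_nonneg _, Int.fract_lt_one _⟩ hΔ0 hub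
          (⌊x * (1 + V x)⌋ - ⌊y * (1 + V y)⌋) ?_
        simp only [circMap, hfract]
        push_cast
        ring
      rw [cdist_comm']
      linarith
    · -- long-arc case, the gap wraps around 0
      push_neg at hhalf
      have hdval : cdist x y = 1 - (y - x) := cdist_eq_long hhalf.le (by linarith)
      rw [hdval] at hlt hdpos ⊢
      set d : ℝ := 1 - (y - x) with hddef
      have hxd : x < d := by rw [hddef]; linarith
      have hsd : 1 - y ≤ d := by rw [hddef]; linarith
      have hs0 : 0 < 1 - y := by linarith
      have hyhalf : 1 / 2 < y := by linarith
      have hVd0 : 0 ≤ V d := hVnn _ hdpos.le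
      have hVdy : V d ≤ V y := hVle _ _ hdpos.le (by linarith)
      have hVxN : V x ≤ N := by rw [← hV1]; exact hVle x 1 hx0 hx1.le
      -- uniform continuity bound at 1
      have hucV : V 1 - V y < 1 / 8 := by
        have h := hδ₁ y ⟨hy0, hy1.le⟩ 1 ⟨by norm_num, le_rfl⟩
          (by rw [Real.dist_eq, abs_of_nonpos (by linarith)]; linarith)
        rw [Real.dist_eq] at h
        calc V 1 - V y ≤ |V 1 - V y| := le_abs_self _
          _ = |V y - V 1| := abs_sub_comm _ _
          _ < 1 / 8 := h
      have hVy1 : V y ≤ V 1 := hVle y 1 hy0 hy1.le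
      set Δ : ℝ := x * (1 + V x) + (1 + N) - y * (1 + V y) with hΔdef
      -- core inequality : x*V x + (1-y)*V y ≥ c*d*V d
      have hcore : (2 : ℝ) ^ (-(σ + 2)) * (d * V d) ≤ x * V x + (1 - y) * V y := by
        by_cases hxbig : d / 2 ≤ x
        · -- use regular variation
          have hd2 : 0 < d / 2 := by linarith
          have hrv := hreg' (d / 2) hd2 (by linarith)
          rw [show 2 * (d / 2) = d by ring] at hrv
          have hV2x : V (d / 2) ≤ V x := hVle _ _ hd2.le hxbig
          have hVdle : V d ≤ 2 ^ (σ + 1) * V x := by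
            refine le_trans hrv ?_
            exact mul_le_mul_of_nonneg_left hV2x (le_of_lt (Real.rpow_pos_of_pos two_pos _))
          have hcc : (2 : ℝ) ^ (-(σ + 2)) * 2 ^ (σ + 1) = 1 / 2 := by
            rw [← Real.rpow_add two_pos, show -(σ + 2) + (σ + 1) = (-1 : ℝ) by ring,
              Real.rpow_neg_one]
            norm_num
          have step1 : (2 : ℝ) ^ (-(σ + 2)) * (d * V d) ≤
              (2 : ℝ) ^ (-(σ + 2)) * (d * (2 ^ (σ + 1) * V x)) := by
            apply mul_le_mul_of_nonneg_left _ hc_pos.le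
            exact mul_le_mul_of_nonneg_left hVdle hdpos.le
          have step2 : (2 : ℝ) ^ (-(σ + 2)) * (d * (2 ^ (σ + 1) * V x)) =
              (1 / 2) * (d * V x) := by
            rw [show (2 : ℝ) ^ (-(σ + 2)) * (d * (2 ^ (σ + 1) * V x)) =
              ((2 : ℝ) ^ (-(σ + 2)) * 2 ^ (σ + 1)) * (d * V x) by ring, hcc]
          have step3 : (1 / 2) * (d * V x) ≤ x * V x := by nlinarith
          have hsVy : 0 ≤ (1 - y) * V y := mul_nonneg hs0.le hVy
          have step4 : (2 : ℝ) ^ (-(σ + 2)) * (d * V d) ≤ x * V x := by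
            calc (2 : ℝ) ^ (-(σ + 2)) * (d * V d)
                ≤ (2 : ℝ) ^ (-(σ + 2)) * (d * (2 ^ (σ + 1) * V x)) := step1
              _ = (1 / 2) * (d * V x) := step2
              _ ≤ x * V x := step3
          linarith
        · -- 1 - y > d / 2
          push_neg at hxbig
          have hs2 : d / 2 < 1 - y := by
            have : d = 1 - (y - x) := hddef
            linarith
          have h1 : (2 : ℝ) ^ (-(σ + 2)) * (d * V d) ≤ (1 / 2) * (d * V d) := by
            apply mul_le_mul_of_nonneg_right hc_half
            exact mul_nonneg hdpos.le hVd0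
          have h2 : (1 / 2) * (d * V d) ≤ (1 - y) * V y := by
            have hm := mul_le_mul hs2.le hVdy hVd0 (by linarith : (0:ℝ) ≤ 1 - y)
            linarith
          have h3 : 0 ≤ x * V x := mul_nonneg hx0 hVx
          calc (2 : ℝ) ^ (-(σ + 2)) * (d * V d) ≤ 1 / 2 * (d * V d) := h1
            _ ≤ (1 - y) * V y := h2
            _ ≤ x * V x + (1 - y) * V y := by linarith
      have hlb : d * (1 + (2 : ℝ) ^ (-(σ + 2)) * V d) ≤ Δ := by
        have hexp : Δ = d + x * V x + (V 1 - V y) + (1 - y) * V y := by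
          simp only [hΔdef, hddef, hV1]; ring
        nlinarith [hcore, hVy1]
      have hub : Δ ≤ 1 / 2 := by
        have h1 : x * V x ≤ ρ₀ * N := by
          apply mul_le_mul (by linarith) hVxN hVx hρ₀pos.le
        have h2 : (1 - y) * V y ≤ ρ₀ * N := by
          apply mul_le_mul (by linarith) hVyN hVy hρ₀pos.le
        have hexp : Δ = d + x * V x + (V 1 - V y) + (1 - y) * V y := by
          simp only [hΔdef, hddef, hV1]; ring
        have hNN : (1 : ℝ) ≤ N := by exact_mod_cast hN
        nlinarith
      have hΔ0 : 0 ≤ Δ := by nlinarith [hlb, hVd0, hc_pos, hdpos]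
      have hfin : Δ ≤ cdist (circMap V x) (circMap V y) := by
        refine cdist_lower ⟨Int.fract_nonneg _, Int.fract_lt_one _⟩
          ⟨Int.fract_nonneg _, Int.fract_lt_one _⟩ hΔ0 hub
          (⌊y * (1 + V y)⌋ - ⌊x * (1 + V x)⌋ - (1 + N)) ?_
        simp only [circMap, hfract, hΔdef]
        push_cast
        ring
      linarith
  intro x hx y hy hlt
  rcases le_total x y with h | h
  · exact key x hx y hy h hlt
  · rw [cdist_comm' x y] at hlt ⊢
    rw [cdist_comm' (circMap V x)]
    exact key y hy x hx h hlt
end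

section
/- Let T be a map in 𝓕 and let ω, Ω be concave moduli of continuity (continuous, nondecreasing, vanishing at 0, concave). Suppose for some sufficiently small c > 0 that liminf_{x→0⁺} (V(x)/ω(x))·(Ω((1+c)x) − Ω(x)) > 0. Then there exist ρ₁ > 0 and C₁ > 0 such that for all x₀, x₁, y₀ ∈ 𝕋 with T(x₁) = x₀ and d(x₀,y₀) < ρ₁, there is a unique y₁ ∈ T^{−1}(y₀) with d(x₁,y₁) ≤ d(x₀,y₀) < ρ₁ satisfying Ω(d(x₁,y₁)) + C₁·ω(d(x₁,y₁)) ≤ Ω(d(x₀,y₀)); moreover the correspondence x₁ ↦ y₁ is injective. -/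
open Real Filter Set

lemma cdist_le_abs (x y : ℝ) : cdist x y ≤ |x - y| := min_le_left _ _

lemma cdist_le_abs_sub (x y : ℝ) : cdist x y ≤ |x - y - 1| :=
  le_trans (min_le_right _ _) (min_le_left _ _)

lemma cdist_le_abs_add (x y : ℝ) : cdist x y ≤ |x - y + 1| :=
  le_trans (min_le_right _ _) (min_le_right _ _)

lemma cdist_eq' {x y : ℝ} (hx : x ∈ Ico (0:ℝ) 1) (hy : y ∈ Ico (0:ℝ) 1) :
    cdist x y = min |x - y| (1 - |x - y|) := by
  obtain ⟨hx0, hx1⟩ := hx; obtain ⟨hy0, hy1⟩ := hy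
  unfold cdist
  have h1 : |x - y - 1| = 1 - (x - y) := by rw [abs_of_nonpos (by linarith)]; ring
  have h2 : |x - y + 1| = 1 + (x - y) := by
    rw [abs_of_nonneg (by linarith : (0:ℝ) ≤ x - y + 1)]; ring
  rw [h1, h2]
  congr 1
  rcases le_total 0 (x - y) with h | h
  · rw [abs_of_nonneg h, min_eq_left (by linarith)]
  · rw [abs_of_nonpos h, min_eq_right (by linarith)]; ring

lemma concave_chord {Ω : ℝ → ℝ} (hconc : ConcaveOn ℝ (Ici 0) Ω) {d s t : ℝ}
    (hd : 0 ≤ d) (hs : 0 < s) (hst : s ≤ t) :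
    s / t * (Ω (d + t) - Ω d) ≤ Ω (d + s) - Ω d := by
  have ht : 0 < t := lt_of_lt_of_le hs hst
  have hb : 0 ≤ s / t := by positivity
  have hb1 : s / t ≤ 1 := by rw [div_le_one ht]; exact hst
  have h := hconc.2 (mem_Ici.mpr hd) (mem_Ici.mpr (by linarith : (0:ℝ) ≤ d + t))
    (by linarith : (0:ℝ) ≤ 1 - s / t) hb (by ring)
  have he : (1 - s / t) • d + (s / t) • (d + t) = d + s := by
    simp only [smul_eq_mul]
    rw [mul_add, ← add_assoc, ← add_mul, sub_add_cancel, one_mul, div_mul_cancel₀ s ht.ne']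
  rw [he] at h
  simp only [smul_eq_mul] at h
  nlinarith

set_option maxHeartbeats 1000000 in
/-- Sufficient condition for `T`-compatibility: if for some sufficiently small `c > 0`
(`0 < c ≤ 2^{−(σ+2)}`) one has
`liminf_{x→0⁺} (V(x)/ω(x))·(Ω((1+c)x) − Ω(x)) > 0`,
then there are `ρ₁ > 0` and `C₁ > 0` such that for all `x₀, x₁, y₀` on the circle with
`T(x₁) = x₀` and `d(x₀,y₀) < ρ₁` there is a unique preimage `y₁` of `y₀` with
`d(x₁,y₁) ≤ d(x₀,y₀)` and `Ω(d(x₁,y₁)) + C₁ ω(d(x₁,y₁)) ≤ Ω(d(x₀,y₀))`; moreover the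
correspondence `x₁ ↦ y₁` is injective. -/
theorem sufficient_condition_T_compatibility
    (V ω Ω : ℝ → ℝ) (σ : ℝ) (hσ : 0 ≤ σ) (N : ℕ) (hN : 0 < N)
    (hV0 : V 0 = 0) (hV1 : V 1 = N) (hVnn : ∀ x, 0 ≤ x → 0 ≤ V x)
    (hVcont : ContinuousOn V (Ici 0)) (hVmono : StrictMonoOn V (Ici 0))
    (hreg : ∀ t : ℝ, 0 < t →
      Tendsto (fun x => V (t * x) / V x) (nhdsWithin 0 (Ioi 0)) (nhds (t ^ σ)))
    (hω0 : ω 0 = 0) (hωcont : Continuous ω) (hωmono : Monotone ω)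
    (hωnn : ∀ x, 0 ≤ ω x) (hωconc : ConcaveOn ℝ (Ici 0) ω)
    (hΩ0 : Ω 0 = 0) (hΩcont : Continuous Ω) (hΩmono : Monotone Ω)
    (hΩnn : ∀ x, 0 ≤ Ω x) (hΩconc : ConcaveOn ℝ (Ici 0) Ω)
    (hliminf : ∃ c : ℝ, 0 < c ∧ c ≤ (2 : ℝ) ^ (-(σ + 2)) ∧
      0 < Filter.liminf (fun x => V x / ω x * (Ω ((1 + c) * x) - Ω x))
            (nhdsWithin 0 (Ioi 0))) :
    ∃ ρ₁ > 0, ∃ C₁ > 0,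
      (∀ x₀ ∈ Ico (0 : ℝ) 1, ∀ x₁ ∈ Ico (0 : ℝ) 1, ∀ y₀ ∈ Ico (0 : ℝ) 1,
        circMap V x₁ = x₀ → cdist x₀ y₀ < ρ₁ →
        ∃! y₁ : ℝ, y₁ ∈ Ico (0 : ℝ) 1 ∧ circMap V y₁ = y₀ ∧
          cdist x₁ y₁ ≤ cdist x₀ y₀ ∧
          Ω (cdist x₁ y₁) + C₁ * ω (cdist x₁ y₁) ≤ Ω (cdist x₀ y₀)) ∧
      (∀ x₀ ∈ Ico (0 : ℝ) 1, ∀ y₀ ∈ Ico (0 : ℝ) 1, cdist x₀ y₀ < ρ₁ →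
        ∀ x₁ x₁' y₁ y₁' : ℝ, x₁ ∈ Ico (0 : ℝ) 1 → x₁' ∈ Ico (0 : ℝ) 1 →
          y₁ ∈ Ico (0 : ℝ) 1 → y₁' ∈ Ico (0 : ℝ) 1 →
          circMap V x₁ = x₀ → circMap V x₁' = x₀ →
          circMap V y₁ = y₀ → circMap V y₁' = y₀ →
          cdist x₁ y₁ ≤ cdist x₀ y₀ → cdist x₁' y₁' ≤ cdist x₀ y₀ →
          x₁ ≠ x₁' → y₁ ≠ y₁') := by
  classical
  obtain ⟨c, hc0, hcle, hL⟩ := hliminf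
  set f : ℝ → ℝ := fun x => x * (1 + V x) with hfdef
  -- ## basic facts about V and f
  have hVm : ∀ a b : ℝ, 0 ≤ a → a ≤ b → V a ≤ V b := fun a b ha hab =>
    hVmono.monotoneOn (mem_Ici.mpr ha) (mem_Ici.mpr (ha.trans hab)) hab
  have hf0 : f 0 = 0 := by simp [hfdef]
  have hf1 : f 1 = 1 + N := by simp [hfdef, hV1]
  have hexpA : ∀ a b : ℝ, 0 ≤ a → a ≤ b → (b - a) * (1 + V b) ≤ f b - f a := by
    intro a b ha hab
    have h1 := hVm a b ha hab
    simp only [hfdef]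
    nlinarith
  have hexpB : ∀ a b : ℝ, 0 ≤ a → a ≤ b → (b - a) * (1 + V a) ≤ f b - f a := by
    intro a b ha hab
    have h1 := hVm a b ha hab
    have hb : 0 ≤ b := ha.trans hab
    simp only [hfdef]
    nlinarith
  have hexpC : ∀ a b : ℝ, 0 ≤ a → a ≤ b → (b - a) * (1 + V (b - a)) ≤ f b - f a := by
    intro a b ha hab
    have h1 := hexpA a b ha hab
    have h2 : V (b - a) ≤ V b := hVm _ _ (by linarith) (by linarith)
    nlinarith [sub_nonneg.mpr hab]
  have hexpE : ∀ a b : ℝ, 0 ≤ a → a ≤ b → b - a ≤ f b - f a := by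
    intro a b ha hab
    have h := hexpB a b ha hab
    have := hVnn a ha
    nlinarith [sub_nonneg.mpr hab]
  have hfnn : ∀ x : ℝ, 0 ≤ x → 0 ≤ f x := by
    intro x hx
    have := hVnn x hx
    simp only [hfdef]
    nlinarith
  have hfmono : ∀ a b : ℝ, 0 ≤ a → a < b → f a < f b := by
    intro a b ha hab
    have h := hexpB a b ha hab.le
    have := hVnn a ha
    nlinarith
  have hfmono' : ∀ a b : ℝ, 0 ≤ a → 0 ≤ b → f a < f b → a < b := by
    intro a b ha hb h
    by_contra hcon
    push_neg at hcon
    rcases eq_or_lt_of_le hcon with rfl | h'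
    · exact lt_irrefl _ h
    · exact absurd (hfmono b a hb h') (by linarith)
  have hfub : ∀ x : ℝ, 0 ≤ x → x < 1 → f x < 1 + N := by
    intro x hx hx1
    rw [← hf1]; exact hfmono x 1 hx hx1
  have hfcont : ContinuousOn f (Icc 0 1) :=
    (continuousOn_id.mul (continuousOn_const.add hVcont)).mono Icc_subset_Ici_self
  -- inverse function via IVT
  have hinv : ∀ t : ℝ, 0 ≤ t → t < 1 + N → ∃ y, y ∈ Ico (0:ℝ) 1 ∧ f y = t := by
    intro t ht ht'
    have hiv := intermediate_value_Icc (zero_le_one) hfcont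
    rw [hf0, hf1] at hiv
    obtain ⟨y, hy, hfy⟩ := hiv ⟨ht, ht'.le⟩
    refine ⟨y, ⟨hy.1, lt_of_le_of_ne hy.2 ?_⟩, hfy⟩
    rintro rfl
    rw [hf1] at hfy
    linarith
  -- uniform continuity
  obtain ⟨ρ, hρpos, hUC⟩ :
      ∃ ρ > 0, ∀ a ∈ Icc (0:ℝ) 1, ∀ b ∈ Icc (0:ℝ) 1, |a - b| ≤ ρ → |f a - f b| < 1/2 := by
    have h := isCompact_Icc.uniformContinuousOn_of_continuous hfcont
    rw [Metric.uniformContinuousOn_iff] at h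
    obtain ⟨δ, hδ, h⟩ := h (1/2) (by norm_num)
    refine ⟨δ/2, by linarith, fun a ha b hb hab => ?_⟩
    have := h a ha b hb (by rw [Real.dist_eq]; linarith)
    rwa [Real.dist_eq] at this
  -- ## extraction from the liminf and regular variation hypotheses
  have evExtract : ∀ {p : ℝ → Prop}, (∀ᶠ x in nhdsWithin (0:ℝ) (Ioi 0), p x) →
      ∃ ε > 0, ∀ x : ℝ, 0 < x → x < ε → p x := by
    intro p hp
    rw [eventually_iff, Metric.mem_nhdsWithin_iff] at hp
    obtain ⟨ε, hε, hsub⟩ := hp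
    exact ⟨ε, hε, fun x hx0 hxε => hsub
      ⟨Metric.mem_ball.mpr (by rw [Real.dist_eq, sub_zero, abs_of_pos hx0]; exact hxε),
        mem_Ioi.mpr hx0⟩⟩
  set L := Filter.liminf (fun x => V x / ω x * (Ω ((1 + c) * x) - Ω x))
      (nhdsWithin (0:ℝ) (Ioi 0)) with hLdef
  have hbdd : IsBoundedUnder (· ≥ ·) (nhdsWithin (0:ℝ) (Ioi 0))
      (fun x => V x / ω x * (Ω ((1 + c) * x) - Ω x)) := by
    apply isBoundedUnder_of_eventually_ge (a := (0:ℝ))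
    filter_upwards [self_mem_nhdsWithin] with x hx
    have hx0 : (0:ℝ) < x := hx
    have h1 : 0 ≤ V x / ω x := div_nonneg (hVnn x hx0.le) (hωnn x)
    have h2 : Ω x ≤ Ω ((1 + c) * x) := hΩmono (by nlinarith)
    exact mul_nonneg h1 (by linarith)
  obtain ⟨ρ₂, hρ₂pos, hE1⟩ := evExtract
    (eventually_lt_of_lt_liminf (show L/2 < L by linarith) hbdd)
  set κ : ℝ := (1/2 : ℝ) ^ σ / 2 with hκdef
  have hhalfpow : (0:ℝ) < (1/2 : ℝ) ^ σ := rpow_pos_of_pos (by norm_num) σ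
  obtain ⟨ρv, hρvpos, hE2⟩ := evExtract
    ((hreg (1/2) (by norm_num)).eventually (eventually_gt_nhds (by linarith : κ < (1/2:ℝ) ^ σ)))
  have hVtend : Tendsto V (nhdsWithin (0:ℝ) (Ioi 0)) (nhds 0) := by
    have h := (hVcont 0 (mem_Ici.mpr le_rfl)).tendsto
    rw [hV0] at h
    exact h.mono_left (nhdsWithin_mono 0 Ioi_subset_Ici_self)
  obtain ⟨ρ₄, hρ₄pos, hE3⟩ := evExtract (hVtend.eventually (eventually_lt_nhds one_pos))
  set ρ₃ : ℝ := min ρ₂ (min ρv ρ₄) with hρ₃def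
  have hρ₃pos : 0 < ρ₃ := lt_min hρ₂pos (lt_min hρvpos hρ₄pos)
  -- the arithmetic relation between c and κ
  have hκ2c : 2 * c ≤ κ := by
    have hpow : (2:ℝ) ^ (-(σ + 2)) = (1/2:ℝ) ^ σ / 4 := by
      rw [Real.rpow_neg (by norm_num : (0:ℝ) ≤ 2), Real.rpow_add (by norm_num : (0:ℝ) < 2),
        (by norm_num : (2:ℝ) ^ (2:ℝ) = 4), one_div, Real.inv_rpow (by norm_num : (0:ℝ) ≤ 2)]
      rw [mul_inv]
      ring
    rw [hpow] at hcle
    rw [hκdef]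
    linarith
  -- ## the key modulus-of-continuity lemma
  have hkey : ∀ d D : ℝ, 0 < d → d < ρ₃ → d + d/2 * V (d/2) ≤ D →
      Ω d + L/2 * ω d ≤ Ω D := by
    intro d D hd0 hdρ hD
    have hdρ₂ : d < ρ₂ := lt_of_lt_of_le hdρ (min_le_left _ _)
    have hdρv : d < ρv := lt_of_lt_of_le hdρ (le_trans (min_le_right _ _) (min_le_left _ _))
    have hdρ₄ : d < ρ₄ := lt_of_lt_of_le hdρ (le_trans (min_le_right _ _) (min_le_right _ _))
    have hVd : 0 < V d := by
      rw [← hV0]; exact hVmono (mem_Ici.mpr le_rfl) (mem_Ici.mpr hd0.le) hd0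
    have hVd1 : V d ≤ 1 := (hE3 d hd0 hdρ₄).le
    have hΔ : 0 ≤ Ω ((1 + c) * d) - Ω d := sub_nonneg.mpr (hΩmono (by nlinarith [mul_pos hc0 hd0]))
    have hωd : 0 ≤ ω d := hωnn d
    -- massage hE1
    have hE1' : L/2 * ω d < V d * (Ω ((1 + c) * d) - Ω d) := by
      have h := hE1 d hd0 hdρ₂
      rcases eq_or_lt_of_le hωd with h0 | h0
      · rw [← h0, div_zero, zero_mul] at h
        linarith
      · have h2 := mul_lt_mul_of_pos_right h h0
        have heq : V d / ω d * (Ω ((1 + c) * d) - Ω d) * ω d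
            = V d * (Ω ((1 + c) * d) - Ω d) := by
          field_simp
        rwa [heq] at h2
    have hE2' : κ * V d < V (d/2) := by
      have h := hE2 d hd0 hdρv
      rw [show (1/2 : ℝ) * d = d/2 by ring] at h
      exact (lt_div_iff₀ hVd).mp h
    rcases le_or_gt (c * d) (d/2 * V (d/2)) with hcase | hcase
    · -- strong expansion case
      have h1 : Ω ((1 + c) * d) ≤ Ω D := hΩmono (by nlinarith [hcase, hD])
      have h2 : L/2 * ω d ≤ Ω ((1 + c) * d) - Ω d := by
        nlinarith [mul_nonneg hΔ (sub_nonneg.mpr hVd1)]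
      linarith
    · -- weak expansion: use concavity
      have hVd2 : 0 < V (d/2) := by
        rw [← hV0]; exact hVmono (mem_Ici.mpr le_rfl) (mem_Ici.mpr (by linarith)) (by linarith)
      have hs0 : 0 < d/2 * V (d/2) := by positivity
      have hcd : 0 < c * d := by positivity
      have hchord := concave_chord hΩconc hd0.le hs0 hcase.le
      rw [show d + c * d = (1 + c) * d by ring] at hchord
      have h2 : L/2 * ω d ≤ d/2 * V (d/2) / (c * d) * (Ω ((1 + c) * d) - Ω d) := by
        rw [div_mul_eq_mul_div (d/2 * V (d/2)) (c*d) (Ω ((1 + c) * d) - Ω d), le_div_iff₀ hcd]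
        have t1 : κ * V d * (Ω ((1 + c) * d) - Ω d) ≤ V (d/2) * (Ω ((1 + c) * d) - Ω d) :=
          mul_le_mul_of_nonneg_right hE2'.le hΔ
        have t0 : 0 ≤ V d * (Ω ((1 + c) * d) - Ω d) := mul_nonneg hVd.le hΔ
        have t2 : L/2 * ω d * (2 * c) ≤ V d * (Ω ((1 + c) * d) - Ω d) * κ := by
          have ha : L/2 * ω d * (2 * c) ≤ V d * (Ω ((1 + c) * d) - Ω d) * (2 * c) :=
            mul_le_mul_of_nonneg_right hE1'.le (by linarith)
          have hb : V d * (Ω ((1 + c) * d) - Ω d) * (2 * c)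
              ≤ V d * (Ω ((1 + c) * d) - Ω d) * κ :=
            mul_le_mul_of_nonneg_left hκ2c t0
          linarith
        have t3 := mul_le_mul_of_nonneg_left t1 (show (0:ℝ) ≤ d/2 by linarith)
        have t4 := mul_le_mul_of_nonneg_left t2 (show (0:ℝ) ≤ d/2 by linarith)
        linarith
      have h3 : Ω (d + d/2 * V (d/2)) ≤ Ω D := hΩmono hD
      linarith
  -- ## helper inequalities
  have habs' : ∀ p q : ℝ, 0 ≤ p → 0 ≤ q →
      |p - q| + |p - q|/2 * V (|p - q|/2) ≤ |f p - f q| := by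
    have key2 : ∀ p q : ℝ, 0 ≤ p → p ≤ q →
        (q - p) + (q - p)/2 * V ((q - p)/2) ≤ f q - f p := by
      intro p q hp hpq
      have h1 := hexpC p q hp hpq
      have h2 : V ((q - p)/2) ≤ V (q - p) := hVm _ _ (by linarith) (by linarith)
      have h3 : 0 ≤ V ((q - p)/2) := hVnn _ (by linarith)
      nlinarith [sub_nonneg.mpr hpq]
    intro p q hp hq
    rcases le_total p q with h | h
    · have hf : f p ≤ f q := by linarith [hexpE p q hp h]
      rw [abs_sub_comm p q, abs_of_nonneg (by linarith : (0:ℝ) ≤ q - p),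
        abs_sub_comm (f p) (f q), abs_of_nonneg (by linarith : (0:ℝ) ≤ f q - f p)]
      exact key2 p q hp h
    · have hf : f q ≤ f p := by linarith [hexpE q p hq h]
      rw [abs_of_nonneg (by linarith : (0:ℝ) ≤ p - q),
        abs_of_nonneg (by linarith : (0:ℝ) ≤ f p - f q)]
      exact key2 q p hq h
  have hW : ∀ u v : ℝ, 0 ≤ v → 1/2 ≤ u → u ≤ 1 → (1 - u) + v ≤ 1/2 →
      ((1 - u) + v) + ((1 - u) + v)/2 * V (((1 - u) + v)/2)
        ≤ (1 - u) * (1 + V u) + v * (1 + V v) := by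
    intro u v hv hu2 hu1 he
    have he0 : 0 ≤ (1 - u) + v := by linarith
    have hVu : 0 ≤ V u := hVnn u (by linarith)
    have hVv : 0 ≤ V v := hVnn v hv
    have hVe : 0 ≤ V (((1 - u) + v)/2) := hVnn _ (by linarith)
    rcases le_total (((1 - u) + v)/2) v with h | h
    · have h1 : V (((1 - u) + v)/2) ≤ V v := hVm _ _ (by linarith) h
      nlinarith [mul_le_mul_of_nonneg_left h1 hv]
    · have h2 : ((1 - u) + v)/2 ≤ 1 - u := by linarith
      have h3 : V (((1 - u) + v)/2) ≤ V u := hVm _ _ (by linarith) (by linarith)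
      nlinarith [mul_le_mul_of_nonneg_left h3 (by linarith : (0:ℝ) ≤ 1 - u)]
  -- ## choice of ρ₁ and C₁
  set ρ₁ : ℝ := min (ρ/2) (min ρ₃ (1/8)) with hρ₁def
  have hρ₁pos : 0 < ρ₁ := lt_min (by linarith) (lt_min hρ₃pos (by norm_num))
  have hρ₁ρ : 2 * ρ₁ ≤ ρ := by
    have := min_le_left (ρ/2) (min ρ₃ (1/8)); linarith
  have hρ₁3 : ρ₁ ≤ ρ₃ := le_trans (min_le_right _ _) (min_le_left _ _)
  have hρ₁8 : ρ₁ ≤ 1/8 := le_trans (min_le_right _ _) (min_le_right _ _)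
  -- ## separation of distinct preimages
  have sep : ∀ z ∈ Ico (0:ℝ) 1, ∀ u ∈ Ico (0:ℝ) 1, ∀ u' ∈ Ico (0:ℝ) 1,
      circMap V u = circMap V u' → cdist z u < ρ₁ → cdist z u' < ρ₁ → u = u' := by
    have core : ∀ z ∈ Ico (0:ℝ) 1, ∀ u ∈ Ico (0:ℝ) 1, ∀ u' ∈ Ico (0:ℝ) 1, u < u' →
        circMap V u = circMap V u' → cdist z u < ρ₁ → cdist z u' < ρ₁ → False := by
      intro z hz u hu u' hu' hlt hcirc h1 h2
      have hcirc' : Int.fract (f u) = Int.fract (f u') := hcirc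
      obtain ⟨m, hm⟩ := Int.fract_eq_fract.mp hcirc'
      have hfu : f u < f u' := hfmono u u' hu.1 hlt
      have hmlt : (m:ℝ) < 0 := by rw [← hm]; linarith
      have hm1 : (m:ℝ) ≤ -1 := by
        have : m < 0 := by exact_mod_cast hmlt
        have : m ≤ -1 := by omega
        exact_mod_cast this
      have hfu'ub : f u' < 1 + N := hfub u' hu'.1 hu'.2
      have hfunn : 0 ≤ f u := hfnn u hu.1
      have hmN : -(N:ℝ) ≤ (m:ℝ) := by
        have hgt : (-(N:ℤ) - 1 : ℝ) < (m:ℝ) := by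
          push_cast
          rw [← hm]
          linarith
        have : (-(N:ℤ) - 1 : ℤ) < m := by exact_mod_cast hgt
        have : -(N:ℤ) ≤ m := by omega
        exact_mod_cast this
      -- the two contradictions
      have contrA : |u - u'| ≤ ρ → False := by
        intro hle
        have h := hUC u ⟨hu.1, hu.2.le⟩ u' ⟨hu'.1, hu'.2.le⟩ hle
        have habs := abs_lt.mp h
        rw [← hm] at hm1
        linarith [habs.1]
      have contrB : u ≤ 2*ρ₁ → 1 - u' ≤ 2*ρ₁ → False := by
        intro hA hB
        have hfA := hUC u ⟨hu.1, hu.2.le⟩ 0 ⟨le_rfl, zero_le_one⟩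
          (by rw [sub_zero, abs_of_nonneg hu.1]; linarith)
        rw [hf0, sub_zero] at hfA
        have hfB := hUC u' ⟨hu'.1, hu'.2.le⟩ 1 ⟨zero_le_one, le_rfl⟩
          (by rw [abs_of_nonpos (by linarith [hu'.2] : u' - 1 ≤ 0)]; linarith)
        rw [hf1] at hfB
        have h1' := (abs_lt.mp hfA).2
        have h2' := (abs_lt.mp hfB).1
        -- f u < 1/2, f u' > 1 + N - 1/2, so m = f u - f u' < -N
        have : (m:ℝ) < -(N:ℝ) := by rw [← hm]; linarith
        linarith
      rw [cdist_eq' hz hu] at h1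
      rw [cdist_eq' hz hu'] at h2
      rcases min_lt_iff.mp h1 with ha | hb <;> rcases min_lt_iff.mp h2 with hc | hd
      · -- both near z
        apply contrA
        have : |u - u'| ≤ |z - u'| + |z - u| := by
          rw [show u - u' = (z - u') - (z - u) by ring]
          exact abs_sub _ _
        linarith
      · -- u near z, u' wrapped
        have hzx : 1 - ρ₁ < |z - u'| := by linarith
        have htri : |z - u'| ≤ |z - u| + |u - u'| := by
          rw [show z - u' = (z - u) + (u - u') by ring]
          exact abs_add_le _ _
        have habs : |u - u'| = u' - u := by rw [abs_of_nonpos (by linarith)]; ring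
        rw [habs] at htri
        exact contrB (by linarith [hu'.2]) (by linarith [hu.1])
      · -- u wrapped, u' near z
        have hzx : 1 - ρ₁ < |z - u| := by linarith
        have htri : |z - u| ≤ |z - u'| + |u - u'| := by
          rw [show z - u = (z - u') + (u' - u) by ring]
          have := abs_add_le (z - u') (u' - u)
          rwa [abs_sub_comm u' u] at this
        have habs : |u - u'| = u' - u := by rw [abs_of_nonpos (by linarith)]; ring
        rw [habs] at htri
        exact contrB (by linarith [hu'.2]) (by linarith [hu.1])
      · -- both wrapped
        have hz1 : 1 - ρ₁ < |z - u| := by linarith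
        have hz2 : 1 - ρ₁ < |z - u'| := by linarith
        rcases lt_abs.mp hz1 with hs1 | hs1 <;> rcases lt_abs.mp hz2 with hs2 | hs2
        · -- u, u' both < ρ₁
          apply contrA
          have hu8 : u < ρ₁ := by linarith [hz.2]
          have hu8' : u' < ρ₁ := by linarith [hz.2]
          rw [abs_of_nonpos (by linarith)]
          linarith [hu.1, hu'.1]
        · exfalso; linarith [hz.2, hu'.2, hz.1, hu.1]
        · exfalso; linarith [hz.2, hu'.2, hz.1, hu.1]
        · apply contrA
          have hu8 : 1 - ρ₁ < u := by linarith [hz.1]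
          have hu8' : 1 - ρ₁ < u' := by linarith [hz.1]
          rw [abs_of_nonpos (by linarith)]
          linarith [hu.2, hu'.2]
    intro z hz u hu u' hu' hcirc h1 h2
    rcases lt_trichotomy u u' with h | h | h
    · exact absurd (core z hz u hu u' hu' h hcirc h1 h2) (not_false)
    · exact h
    · exact absurd (core z hz u' hu' u hu h hcirc.symm h2 h1) (not_false)
  have hN1 : (1:ℝ) ≤ (N:ℝ) := by exact_mod_cast hN
  refine ⟨ρ₁, hρ₁pos, L/2, by linarith, ?_, ?_⟩
  · -- existence and uniqueness
    intro x₀ hx₀ x₁ hx₁ y₀ hy₀ hT hd₀c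
    have hTf : Int.fract (f x₁) = x₀ := hT
    have hfx₁lt : f x₁ < 1 + N := hfub x₁ hx₁.1 hx₁.2
    have hfx₁nn : 0 ≤ f x₁ := hfnn x₁ hx₁.1
    set k : ℤ := ⌊f x₁⌋ with hkdef
    have hk0 : 0 ≤ k := Int.floor_nonneg.mpr hfx₁nn
    have hkN : k ≤ (N:ℤ) := by
      have h1 : f x₁ < (((N:ℤ) + 1 : ℤ) : ℝ) := by push_cast; linarith
      have := Int.floor_lt.mpr h1
      omega
    have hkNR : (k:ℝ) ≤ (N:ℝ) := by exact_mod_cast hkN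
    have hk0R : (0:ℝ) ≤ (k:ℝ) := by exact_mod_cast hk0
    have hfx₁ : f x₁ = x₀ + (k:ℝ) := by
      simp only [Int.fract] at hTf
      rw [hkdef]
      linarith
    have hD : cdist x₀ y₀ = min |x₀ - y₀| (1 - |x₀ - y₀|) := cdist_eq' hx₀ hy₀
    have route1 : ∀ j : ℤ, 0 ≤ y₀ + (j:ℝ) → y₀ + (j:ℝ) < 1 + N →
        |f x₁ - (y₀ + (j:ℝ))| = cdist x₀ y₀ →
        ∃ y₁, y₁ ∈ Ico (0:ℝ) 1 ∧ Int.fract (f y₁) = y₀ ∧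
          ∃ e, 0 ≤ e ∧ cdist x₁ y₁ ≤ e ∧ e + e/2 * V (e/2) ≤ cdist x₀ y₀ := by
      intro j h0 h1 habs
      obtain ⟨y₁, hy₁, hfy₁⟩ := hinv _ h0 h1
      refine ⟨y₁, hy₁, ?_, |x₁ - y₁|, abs_nonneg _, cdist_le_abs _ _, ?_⟩
      · rw [hfy₁, Int.fract_add_intCast, Int.fract_eq_self.mpr ⟨hy₀.1, hy₀.2⟩]
      · have h := habs' x₁ y₁ hx₁.1 hy₁.1
        rw [hfy₁, habs] at h
        exact h
    have main : ∃ y₁, y₁ ∈ Ico (0:ℝ) 1 ∧ Int.fract (f y₁) = y₀ ∧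
        ∃ e, 0 ≤ e ∧ cdist x₁ y₁ ≤ e ∧ e + e/2 * V (e/2) ≤ cdist x₀ y₀ := by
      rcases le_or_gt |x₀ - y₀| (1 - |x₀ - y₀|) with hcase | hcase
      · -- no wrap
        have hDeq : cdist x₀ y₀ = |x₀ - y₀| := by rw [hD]; exact min_eq_left hcase
        refine route1 k (by linarith [hy₀.1]) (by linarith [hy₀.2]) ?_
        rw [hfx₁, show x₀ + (k:ℝ) - (y₀ + (k:ℝ)) = x₀ - y₀ by ring, hDeq]
      · -- wrap
        have hDeq : cdist x₀ y₀ = 1 - |x₀ - y₀| := by rw [hD]; exact min_eq_right hcase.le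
        rcases lt_trichotomy x₀ y₀ with hxy | hxy | hxy
        · -- x₀ < y₀ : wrap downward through 0
          have habs0 : |x₀ - y₀| = y₀ - x₀ := by rw [abs_of_neg (by linarith)]; ring
          rcases eq_or_lt_of_le hk0 with hk | hk
          · -- k = 0 : boundary case
            have hfx₁0 : f x₁ = x₀ := by rw [hfx₁, ← hk]; norm_num
            obtain ⟨y₁, hy₁, hfy₁⟩ := hinv (y₀ + N)
              (add_nonneg hy₀.1 (Nat.cast_nonneg N)) (by linarith [hy₀.2])
            have hfr : Int.fract (f y₁) = y₀ := by
              rw [hfy₁, show (N:ℝ) = ((N:ℤ):ℝ) by push_cast; ring, Int.fract_add_intCast,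
                Int.fract_eq_self.mpr ⟨hy₀.1, hy₀.2⟩]
            have hx₁le : x₁ ≤ x₀ := by
              have h := hexpE 0 x₁ le_rfl hx₁.1
              rw [hf0] at h
              linarith [hfx₁0.symm.le, h]
            have hy₁le : 1 - y₁ ≤ 1 - y₀ := by
              have h := hexpE y₁ 1 hy₁.1 hy₁.2.le
              rw [hf1, hfy₁] at h
              linarith
            have h1 : x₁ * (1 + V x₁) ≤ x₀ := by
              have h := hexpA 0 x₁ le_rfl hx₁.1
              rw [hf0, hfx₁0] at h
              linarith
            have h2 : (1 - y₁) * (1 + V y₁) ≤ 1 - y₀ := by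
              have h := hexpB y₁ 1 hy₁.1 hy₁.2.le
              rw [hf1, hfy₁] at h
              linarith
            have hcd8 : cdist x₀ y₀ < 1/8 := lt_of_lt_of_le hd₀c hρ₁8
            have hcdeq : cdist x₀ y₀ = (1 - y₀) + x₀ := by rw [hDeq, habs0]; ring
            have hele : (1 - y₁) + x₁ ≤ cdist x₀ y₀ := by rw [hcdeq]; linarith
            have hy₁half : 1/2 ≤ y₁ := by
              have : 1 - y₀ ≤ cdist x₀ y₀ := by rw [hcdeq]; linarith [hx₀.1]
              linarith
            have hwcon := hW y₁ x₁ hx₁.1 hy₁half hy₁.2.le (by linarith)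
            refine ⟨y₁, hy₁, hfr, (1 - y₁) + x₁, by linarith [hx₁.1, hy₁.2.le], ?_, ?_⟩
            · have habs1 : |x₁ - y₁ + 1| = (1 - y₁) + x₁ := by
                rw [abs_of_nonneg (by linarith [hx₁.1, hy₁.2.le] : (0:ℝ) ≤ x₁ - y₁ + 1)]
                ring
              rw [← habs1]
              exact cdist_le_abs_add _ _
            · calc ((1 - y₁) + x₁) + ((1 - y₁) + x₁)/2 * V (((1 - y₁) + x₁)/2)
                  ≤ (1 - y₁) * (1 + V y₁) + x₁ * (1 + V x₁) := hwcon
                _ ≤ (1 - y₀) + x₀ := by linarith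
                _ = cdist x₀ y₀ := hcdeq.symm
          · -- 1 ≤ k
            have hk1 : (1:ℝ) ≤ (k:ℝ) := by exact_mod_cast hk
            have hc : ((k - 1 : ℤ):ℝ) = (k:ℝ) - 1 := by push_cast; ring
            refine route1 (k-1) (by rw [hc]; linarith [hy₀.1]) (by rw [hc]; linarith [hy₀.2]) ?_
            rw [hfx₁, hc, show x₀ + (k:ℝ) - (y₀ + ((k:ℝ) - 1)) = x₀ - y₀ + 1 by ring,
              abs_of_nonneg (by linarith [hx₀.1, hy₀.2] : (0:ℝ) ≤ x₀ - y₀ + 1), hDeq, habs0]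
            ring
        · -- x₀ = y₀ contradicts wrap
          exfalso
          rw [hxy, sub_self, abs_zero] at hcase
          linarith
        · -- y₀ < x₀ : wrap upward through 1
          have habs0 : |x₀ - y₀| = x₀ - y₀ := abs_of_pos (by linarith)
          rcases eq_or_lt_of_le hkN with hk | hk
          · -- k = N : boundary case
            obtain ⟨y₁, hy₁, hfy₁⟩ := hinv y₀ hy₀.1 (by linarith [hy₀.2])
            have hfr : Int.fract (f y₁) = y₀ := by
              rw [hfy₁]; exact Int.fract_eq_self.mpr ⟨hy₀.1, hy₀.2⟩
            have hfx₁N : f x₁ = x₀ + (N:ℝ) := by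
              rw [hfx₁, hk]; push_cast; ring
            have hx₁ge : 1 - x₁ ≤ 1 - x₀ := by
              have h := hexpE x₁ 1 hx₁.1 hx₁.2.le
              rw [hf1, hfx₁N] at h
              linarith
            have hy₁le : y₁ ≤ y₀ := by
              have h := hexpE 0 y₁ le_rfl hy₁.1
              rw [hf0, hfy₁] at h
              linarith
            have h1 : (1 - x₁) * (1 + V x₁) ≤ 1 - x₀ := by
              have h := hexpB x₁ 1 hx₁.1 hx₁.2.le
              rw [hf1, hfx₁N] at h
              linarith
            have h2 : y₁ * (1 + V y₁) ≤ y₀ := by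
              have h := hexpA 0 y₁ le_rfl hy₁.1
              rw [hf0, hfy₁] at h
              linarith
            have hcd8 : cdist x₀ y₀ < 1/8 := lt_of_lt_of_le hd₀c hρ₁8
            have hcdeq : cdist x₀ y₀ = (1 - x₀) + y₀ := by rw [hDeq, habs0]; ring
            have hele : (1 - x₁) + y₁ ≤ cdist x₀ y₀ := by rw [hcdeq]; linarith
            have hx₁half : 1/2 ≤ x₁ := by
              have : 1 - x₀ ≤ cdist x₀ y₀ := by rw [hcdeq]; linarith [hy₀.1]
              linarith
            have hwcon := hW x₁ y₁ hy₁.1 hx₁half hx₁.2.le (by linarith)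
            refine ⟨y₁, hy₁, hfr, (1 - x₁) + y₁, by linarith [hy₁.1, hx₁.2.le], ?_, ?_⟩
            · have habs1 : |x₁ - y₁ - 1| = (1 - x₁) + y₁ := by
                rw [abs_of_nonpos (by linarith [hy₁.1, hx₁.2.le] : x₁ - y₁ - 1 ≤ 0)]
                ring
              rw [← habs1]
              exact cdist_le_abs_sub _ _
            · calc ((1 - x₁) + y₁) + ((1 - x₁) + y₁)/2 * V (((1 - x₁) + y₁)/2)
                  ≤ (1 - x₁) * (1 + V x₁) + y₁ * (1 + V y₁) := hwcon
                _ ≤ (1 - x₀) + y₀ := by linarith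
                _ = cdist x₀ y₀ := hcdeq.symm
          · -- k < N
            have hk1 : (k:ℝ) + 1 ≤ (N:ℝ) := by exact_mod_cast (by omega : k + 1 ≤ (N:ℤ))
            have hc : ((k + 1 : ℤ):ℝ) = (k:ℝ) + 1 := by push_cast; ring
            refine route1 (k+1) (by rw [hc]; linarith [hy₀.1]) (by rw [hc]; linarith [hy₀.2]) ?_
            rw [hfx₁, hc, show x₀ + (k:ℝ) - (y₀ + ((k:ℝ) + 1)) = x₀ - y₀ - 1 by ring,
              abs_of_nonpos (by linarith [hy₀.1, hx₀.2] : x₀ - y₀ - 1 ≤ 0), hDeq, habs0]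
            ring
    obtain ⟨y₁, hy₁m, hfr, e, he0, hce, hequant⟩ := main
    have hy₁circ : circMap V y₁ = y₀ := hfr
    have hVe2 : 0 ≤ e/2 * V (e/2) := mul_nonneg (by linarith) (hVnn _ (by linarith))
    have hcd : cdist x₁ y₁ ≤ cdist x₀ y₀ := le_trans hce (by linarith)
    have hΩineq : Ω (cdist x₁ y₁) + L/2 * ω (cdist x₁ y₁) ≤ Ω (cdist x₀ y₀) := by
      rcases eq_or_lt_of_le (cdist_nonneg' x₁ y₁) with h0 | h0
      · rw [← h0, hω0, hΩ0]
        simpa using hΩnn (cdist x₀ y₀)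
      · apply hkey _ _ h0 (lt_of_lt_of_le (lt_of_le_of_lt hcd hd₀c) hρ₁3)
        have hde : cdist x₁ y₁ ≤ e := hce
        have hmon : cdist x₁ y₁/2 * V (cdist x₁ y₁/2) ≤ e/2 * V (e/2) := by
          have hv1 : V (cdist x₁ y₁/2) ≤ V (e/2) := hVm _ _ (by linarith) (by linarith)
          have hv0 : 0 ≤ V (cdist x₁ y₁/2) := hVnn _ (by linarith)
          nlinarith
        linarith
    refine ⟨y₁, ⟨hy₁m, hy₁circ, hcd, hΩineq⟩, ?_⟩
    rintro y' ⟨hy'm, hy'circ, hy'cd, -⟩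
    exact sep x₁ hx₁ y' hy'm y₁ hy₁m (hy'circ.trans hy₁circ.symm)
      (lt_of_le_of_lt hy'cd hd₀c) (lt_of_le_of_lt hcd hd₀c)
  · -- injectivity
    intro x₀ hx₀ y₀ hy₀ hd₀c x₁ x₁' y₁ y₁' hx₁ hx₁' hy₁ hy₁' hcx hcx' hcy hcy' hle hle' hne heq
    apply hne
    subst heq
    exact sep y₁ hy₁ x₁ hx₁ x₁' hx₁' (hcx.trans hcx'.symm)
      (by rw [cdist_comm']; exact lt_of_le_of_lt hle hd₀c)
      (by rw [cdist_comm']; exact lt_of_le_of_lt hle' hd₀c)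
end

section
/- Let T : 𝕋 → 𝕋 be continuous with finitely many preimages at each point, f continuous, and suppose there exist χ > 0 and a continuous positive function h with 𝓛_f h = χ h, where 𝓛_f is the transfer operator. Let ν be a Borel probability with 𝓛_f* ν = χ ν and set μ = h·ν (assuming ∫ h dν = 1). Then μ is a T-invariant probability measure: ∫ ψ∘T dμ = ∫ ψ dμ for all continuous ψ. -/
open Real MeasureTheory
open scoped NNReal ENNReal

/-- If `𝓛_f h = χ h` with `h > 0` continuous, `χ > 0`, and `𝓛_f* ν = χ ν` for a Borel
probability `ν` with `∫ h dν = 1`, then `μ = h·ν` is a `T`-invariant probability: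
`∫ ψ∘T dμ = ∫ ψ dμ` for every continuous `ψ`. -/
theorem eigenmeasure_invariant {X : Type*} [TopologicalSpace X] [CompactSpace X]
    [MeasurableSpace X] [BorelSpace X]
    (T : X → X) (hT : Continuous T) (hfin : ∀ x, (T ⁻¹' {x}).Finite)
    (f h : X → ℝ) (hf : Continuous f) (hh : Continuous h) (hhpos : ∀ x, 0 < h x)
    (χ : ℝ) (hχ : 0 < χ)
    (L : (X → ℝ) → (X → ℝ))
    (hL : ∀ ψ : X → ℝ, ∀ x, L ψ x = ∑' y : T ⁻¹' {x}, Real.exp (f y) * ψ y)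
    (heig : ∀ x, L h x = χ * h x)
    (ν : Measure X) [IsProbabilityMeasure ν]
    (hdual : ∀ φ : X → ℝ, Continuous φ → ∫ x, L φ x ∂ν = χ * ∫ x, φ x ∂ν)
    (hnorm : ∫ x, h x ∂ν = 1)
    (μ : Measure X) (hμ : μ = ν.withDensity (fun x => ENNReal.ofReal (h x))) :
    IsProbabilityMeasure μ ∧
      ∀ ψ : X → ℝ, Continuous ψ → ∫ x, ψ (T x) ∂μ = ∫ x, ψ x ∂μ := by
  -- integrals against μ reduce to weighted integrals against ν
  have hmeas : Measurable fun x => (h x).toNNReal :=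
    (continuous_real_toNNReal.comp hh).measurable
  have hint : ∀ g : X → ℝ, Continuous g →
      ∫ x, g x ∂μ = ∫ x, g x * h x ∂ν := by
    intro g hg
    rw [hμ]
    have : (fun x => ENNReal.ofReal (h x)) = fun x => ((h x).toNNReal : ℝ≥0∞) := rfl
    rw [this, integral_withDensity_eq_integral_smul hmeas]
    refine integral_congr_ae (Filter.Eventually.of_forall fun x => ?_)
    simp [NNReal.smul_def, Real.coe_toNNReal _ (hhpos x).le, mul_comm]
  constructor
  · constructor
    rw [hμ, withDensity_apply _ MeasurableSet.univ]
    obtain ⟨C, hC⟩ := (isCompact_range hh).isBounded.exists_norm_le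
    have hinteg : Integrable h ν :=
      ⟨hh.aestronglyMeasurable, HasFiniteIntegral.of_bounded (C := C)
        (Filter.Eventually.of_forall fun x => hC _ (Set.mem_range_self x))⟩
    rw [Measure.restrict_univ,
      ← ofReal_integral_eq_lintegral_ofReal hinteg
        (Filter.Eventually.of_forall fun x => (hhpos x).le),
      hnorm, ENNReal.ofReal_one]
  · intro ψ hψ
    rw [hint (fun x => ψ (T x)) (hψ.comp hT), hint _ hψ]
    -- key computation via the transfer operator
    set φ : X → ℝ := fun x => ψ (T x) * h x with hφdef
    have hLφ : ∀ x, L φ x = χ * (ψ x * h x) := by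
      intro x
      rw [hL]
      have h1 : ∀ y : T ⁻¹' {x}, Real.exp (f y) * φ y = ψ x * (Real.exp (f y) * h y) := by
        intro y
        have hy : T (y : X) = x := y.2
        simp [hφdef, hy]; ring
      rw [tsum_congr h1, tsum_mul_left, ← hL, heig]
      ring
    have hd := hdual φ ((hψ.comp hT).mul hh)
    have : ∫ x, L φ x ∂ν = χ * ∫ x, ψ x * h x ∂ν := by
      calc ∫ x, L φ x ∂ν = ∫ x, χ * (ψ x * h x) ∂ν := by
            exact integral_congr_ae (Filter.Eventually.of_forall fun x => hLφ x)
        _ = χ * ∫ x, ψ x * h x ∂ν := integral_const_mul _ _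
    rw [this] at hd
    exact (mul_left_cancel₀ (ne_of_gt hχ) hd.symm)
end

section
/- Let T : 𝕋 → 𝕋 be topologically exact and 𝓛 a Markov transfer operator (𝓛𝟙 = 𝟙) with strictly positive weights on C⁰(𝕋). Suppose ψ is a continuous real function such that max 𝓛^k ψ = max ψ for all k ≥ 1. Then for every k, T^{−k}(argmax 𝓛^k ψ) ⊆ argmax ψ, and consequently ψ attains its maximum on a dense set, hence ψ is constant. -/
open Real Set

/-- If `T` is topologically exact and `𝓛` a Markov transfer operator with strictly
positive weights, and `ψ` is continuous with `max 𝓛^k ψ = max ψ` for all `k ≥ 1`, then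
`T^{−k}(argmax 𝓛^k ψ) ⊆ argmax ψ` for every `k`, and `ψ` is constant. -/
theorem max_preserved_implies_constant {X : Type*} [TopologicalSpace X] [CompactSpace X]
    [Nonempty X]
    (T : X → X) (hT : Continuous T) (hsurj : Function.Surjective T)
    (hfin : ∀ x, (T ⁻¹' {x}).Finite) (hne : ∀ x, (T ⁻¹' {x}).Nonempty)
    (hexact : ∀ U : Set X, IsOpen U → U.Nonempty → ∃ M : ℕ, T^[M] '' U = Set.univ)
    (p : X → ℝ) (hp : Continuous p) (hppos : ∀ x, 0 < p x)
    (hmarkov : ∀ x, ∑' y : T ⁻¹' {x}, p (y : X) = 1)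
    (L : (X → ℝ) → (X → ℝ))
    (hL : ∀ φ : X → ℝ, ∀ x, L φ x = ∑' y : T ⁻¹' {x}, p (y : X) * φ (y : X))
    (hLcont : ∀ φ : X → ℝ, Continuous φ → Continuous (L φ))
    (ψ : X → ℝ) (hψ : Continuous ψ)
    (hmax : ∀ k : ℕ, 1 ≤ k → sSup (Set.range (L^[k] ψ)) = sSup (Set.range ψ)) :
    (∀ k : ℕ, ∀ y : X,
        (L^[k] ψ) (T^[k] y) = sSup (Set.range (L^[k] ψ)) →
        ψ y = sSup (Set.range ψ)) ∧
      ∀ a b : X, ψ a = ψ b := by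
  -- key equality lemma
  have key : ∀ φ : X → ℝ, Continuous φ → ∀ x : X,
      L φ x = sSup (Set.range φ) → ∀ y ∈ T ⁻¹' {x}, φ y = sSup (Set.range φ) := by
    intro φ hφ x hLx y hy
    set M := sSup (Set.range φ) with hM
    obtain ⟨z, -, hz⟩ := isCompact_univ.exists_isMaxOn Set.univ_nonempty hφ.continuousOn
    have hbdd : BddAbove (Set.range φ) := ⟨φ z, by rintro _ ⟨w, rfl⟩; exact hz (Set.mem_univ w)⟩
    have hle : ∀ w : X, φ w ≤ M := fun w => le_csSup hbdd ⟨w, rfl⟩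
    haveI := (hfin x).fintype
    have hsum : L φ x = ∑ w : (T ⁻¹' {x} : Set X), p (w : X) * φ (w : X) := by
      rw [hL]; exact tsum_fintype _
    have hone : ∑ w : (T ⁻¹' {x} : Set X), p (w : X) = 1 := by
      rw [← hmarkov x]; exact (tsum_fintype _).symm
    have hzero : ∑ w : (T ⁻¹' {x} : Set X), p (w : X) * (M - φ (w : X)) = 0 := by
      have : ∑ w : (T ⁻¹' {x} : Set X), p (w : X) * (M - φ (w : X))
          = (∑ w : (T ⁻¹' {x} : Set X), p (w : X)) * M
            - ∑ w : (T ⁻¹' {x} : Set X), p (w : X) * φ (w : X) := by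
        rw [Finset.sum_mul, ← Finset.sum_sub_distrib]
        congr 1; ext w; ring
      rw [this, hone, one_mul, ← hsum, hLx]
      ring
    have hterm : ∀ w : (T ⁻¹' {x} : Set X),
        p (w : X) * (M - φ (w : X)) = 0 := by
      intro w
      have := (Finset.sum_eq_zero_iff_of_nonneg (s := Finset.univ)
        (f := fun w : (T ⁻¹' {x} : Set X) => p (w : X) * (M - φ (w : X)))
        (fun w _ =>
          mul_nonneg (hppos (w : X)).le (sub_nonneg.mpr (hle (w : X))))).mp hzero
      exact this w (Finset.mem_univ w)
    have := hterm ⟨y, hy⟩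
    have h2 : M - φ y = 0 := by
      rcases mul_eq_zero.mp this with h | h
      · exact absurd h (hppos y).ne'
      · exact h
    linarith
  -- continuity of iterates
  have hcont : ∀ k : ℕ, Continuous (L^[k] ψ) := by
    intro k
    induction k with
    | zero => simpa using hψ
    | succ n ih => rw [Function.iterate_succ_apply']; exact hLcont _ ih
  have part1 : ∀ k : ℕ, ∀ y : X,
      (L^[k] ψ) (T^[k] y) = sSup (Set.range (L^[k] ψ)) →
      ψ y = sSup (Set.range ψ) := by
    intro k
    induction k with
    | zero => intro y h; simpa using h
    | succ n ih =>
      intro y h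
      have hrange : sSup (Set.range (L^[n] ψ)) = sSup (Set.range ψ) := by
        rcases Nat.eq_zero_or_pos n with rfl | hn
        · simp
        · exact hmax n hn
      have hrange' : sSup (Set.range (L^[n + 1] ψ)) = sSup (Set.range ψ) :=
        hmax (n + 1) (Nat.succ_le_succ (Nat.zero_le n))
      have h' : L (L^[n] ψ) (T (T^[n] y)) = sSup (Set.range (L^[n] ψ)) := by
        rw [← Function.iterate_succ_apply' L, ← Function.iterate_succ_apply' T,
          hrange, ← hrange']
        exact h
      have := key (L^[n] ψ) (hcont n) (T (T^[n] y)) h' (T^[n] y) rfl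
      exact ih y this
  refine ⟨part1, ?_⟩
  -- ψ is constant
  set M := sSup (Set.range ψ) with hMdef
  have hall : ∀ a : X, ψ a = M := by
    have hSclosed : IsClosed (ψ ⁻¹' {M}) := (isClosed_singleton).preimage hψ
    have hSdense : Dense (ψ ⁻¹' {M}) := by
      rw [dense_iff_inter_open]
      intro U hU hUne
      obtain ⟨k, hk⟩ := hexact U hU hUne
      -- max of L^[k] ψ attained
      obtain ⟨x₀, -, hx₀⟩ := isCompact_univ.exists_isMaxOn Set.univ_nonempty (hcont k).continuousOn
      have hbdd : BddAbove (Set.range (L^[k] ψ)) :=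
        ⟨(L^[k] ψ) x₀, by rintro _ ⟨w, rfl⟩; exact hx₀ (Set.mem_univ w)⟩
      have hx₀max : (L^[k] ψ) x₀ = sSup (Set.range (L^[k] ψ)) := by
        refine le_antisymm (le_csSup hbdd ⟨x₀, rfl⟩) ?_
        exact csSup_le (Set.range_nonempty _) (by rintro _ ⟨w, rfl⟩; exact hx₀ (Set.mem_univ w))
      have : x₀ ∈ T^[k] '' U := hk ▸ Set.mem_univ x₀
      obtain ⟨y, hyU, hyx⟩ := this
      have : ψ y = M := part1 k y (by rw [hyx]; exact hx₀max)
      exact ⟨y, hyU, this⟩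
    have : ψ ⁻¹' {M} = Set.univ := hSclosed.closure_eq ▸ hSdense.closure_eq
    intro a
    have : a ∈ ψ ⁻¹' {M} := this ▸ Set.mem_univ a
    exact this
  intro a b; rw [hall a, hall b]
end
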